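/- Let G' be obtained from the disjoint union of graphs G and H by identifying a vertex u of G with a vertex w of H. Then p(G'; z) = p(G; z)·p(H; z) − p_u(G; z)·p_w(H; z). -/

import Mathlib

open Polynomial

variable {V : Type*}

/-- `M` (a finite set of edges) is a matching of the graph `G`:
its members are edges of `G` and no two distinct members share an endpoint. -/
def IsGraphMatching (G : SimpleGraph V) (M : Finset (Sym2 V)) : Prop :=
  (M : Set (Sym2 V)) ⊆ G.edgeSet ∧
    ∀ e ∈ M, ∀ f ∈ M, e ≠ f → ∀ x, x ∈ e → x ∉ f

/-- The set of vertices covered by the edge set `M` is exactly `S`. -/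
def Covers (M : Finset (Sym2 V)) (S : Finset V) : Prop :=
  ∀ x, x ∈ S ↔ ∃ e ∈ M, x ∈ e

/-- `M` is a perfect matching of the induced subgraph `G[S]`. -/
def IsPerfectMatchingOn (G : SimpleGraph V) (M : Finset (Sym2 V)) (S : Finset V) : Prop :=
  IsGraphMatching G M ∧ Covers M S

/-- `S` is a perfectly matchable set of `G`. -/
def IsPMS (G : SimpleGraph V) (S : Finset V) : Prop :=
  ∃ M, IsPerfectMatchingOn G M S

open Classical in
/-- The perfectly matchable set polynomial of the subgraph of `G` induced on the
ground vertex set `A`: the generating function `∑ p_{2k} z^k` where `p_{2k}` is the number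
of perfectly matchable sets `S ⊆ A` with `|S| = 2k`. -/
noncomputable def pmPoly [Fintype V] (G : SimpleGraph V) (A : Finset V) : Polynomial ℤ :=
  ∑ S ∈ A.powerset, if IsPMS G S then X ^ (S.card / 2) else 0

/-- `G` has no cycle of even length. -/
def NoEvenCycle (G : SimpleGraph V) : Prop :=
  ∀ (v : V) (c : G.Walk v v), c.IsCycle → ¬ Even c.length

/-- endpoints of an edge as a Finset -/
noncomputable def eset [DecidableEq V] (e : Sym2 V) : Finset V := {e.out.1, e.out.2}

lemma mem_eset [DecidableEq V] {x : V} {e : Sym2 V} : x ∈ eset e ↔ x ∈ e := by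
  classical
  rw [eset, Finset.mem_insert, Finset.mem_singleton]
  conv_rhs => rw [← e.out_eq]
  exact (Sym2.mem_iff (b := e.out.1) (c := e.out.2)).symm

lemma card_eset [DecidableEq V] {e : Sym2 V} (h : ¬ e.IsDiag) : (eset e).card = 2 := by
  classical
  apply Finset.card_pair
  intro hxy
  apply h
  rw [← e.out_eq]
  exact Sym2.isDiag_iff_proj_eq.2 hxy

lemma isPMS_even [DecidableEq V] {G : SimpleGraph V} {S : Finset V} (h : IsPMS G S) :
    Even S.card := by
  obtain ⟨M, ⟨⟨hedge, hdisj⟩, hcov⟩⟩ := h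
  have hS : S = M.biUnion eset := by
    ext x
    simp only [Finset.mem_biUnion]
    rw [hcov x]
    exact exists_congr fun e => and_congr_right fun _ => mem_eset.symm
  have hpd : ∀ e ∈ M, ∀ f ∈ M, e ≠ f → Disjoint (eset e) (eset f) := by
    intro e he f hf hne
    rw [Finset.disjoint_left]
    intro x hx hx'
    exact hdisj e he f hf hne x (mem_eset.1 hx) (mem_eset.1 hx')
  rw [hS, Finset.card_biUnion hpd]
  have : ∀ e ∈ M, (eset e).card = 2 := by
    intro e he
    exact card_eset (G.not_isDiag_of_mem_edgeSet (hedge he))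
  rw [Finset.sum_congr rfl this]
  simp [Finset.sum_const, Nat.even_iff]

lemma isPMS_union [DecidableEq V] {G : SimpleGraph V} {S₁ S₂ : Finset V}
    (h₁ : IsPMS G S₁) (h₂ : IsPMS G S₂) (hd : Disjoint S₁ S₂) : IsPMS G (S₁ ∪ S₂) := by
  obtain ⟨M₁, ⟨⟨he₁, hm₁⟩, hc₁⟩⟩ := h₁
  obtain ⟨M₂, ⟨⟨he₂, hm₂⟩, hc₂⟩⟩ := h₂
  have key₁ : ∀ e ∈ M₁, ∀ x ∈ e, x ∈ S₁ := fun e he x hx => (hc₁ x).2 ⟨e, he, hx⟩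
  have key₂ : ∀ e ∈ M₂, ∀ x ∈ e, x ∈ S₂ := fun e he x hx => (hc₂ x).2 ⟨e, he, hx⟩
  refine ⟨M₁ ∪ M₂, ⟨⟨?_, ?_⟩, ?_⟩⟩
  · intro e he
    rcases Finset.mem_union.1 he with h | h
    · exact he₁ h
    · exact he₂ h
  · intro e he f hf hne x hxe hxf
    rcases Finset.mem_union.1 he with h | h <;> rcases Finset.mem_union.1 hf with h' | h'
    · exact hm₁ e h f h' hne x hxe hxf
    · exact Finset.disjoint_left.1 hd (key₁ e h x hxe) (key₂ f h' x hxf)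
    · exact Finset.disjoint_left.1 hd (key₁ f h' x hxf) (key₂ e h x hxe)
    · exact hm₂ e h f h' hne x hxe hxf
  · intro x
    rw [Finset.mem_union, hc₁ x, hc₂ x]
    constructor
    · rintro (⟨e, he, hx⟩ | ⟨e, he, hx⟩)
      · exact ⟨e, Finset.mem_union_left _ he, hx⟩
      · exact ⟨e, Finset.mem_union_right _ he, hx⟩
    · rintro ⟨e, he, hx⟩
      rcases Finset.mem_union.1 he with h | h
      · exact Or.inl ⟨e, h, hx⟩
      · exact Or.inr ⟨e, h, hx⟩

open Classical in
lemma pm_prod [Fintype V] [DecidableEq V] (G : SimpleGraph V) (C D : Finset V)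
    (hd : Disjoint C D) :
    (∑ S ∈ (C ∪ D).powerset,
        if IsPMS G (S ∩ C) ∧ IsPMS G (S ∩ D) then (X : Polynomial ℤ) ^ (S.card / 2) else 0)
      = pmPoly G C * pmPoly G D := by
  rw [pmPoly, pmPoly, Finset.sum_mul_sum, ← Finset.sum_product']
  refine Finset.sum_bij' (fun S _ => (S ∩ C, S ∩ D)) (fun p _ => p.1 ∪ p.2) ?_ ?_ ?_ ?_ ?_
  · intro S hS
    simp only [Finset.mem_product, Finset.mem_powerset]
    exact ⟨Finset.inter_subset_right, Finset.inter_subset_right⟩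
  · intro p hp
    simp only [Finset.mem_product, Finset.mem_powerset] at hp ⊢
    exact Finset.union_subset_union hp.1 hp.2
  · intro S hS
    simp only [Finset.mem_powerset] at hS
    show (S ∩ C) ∪ (S ∩ D) = S
    rw [← Finset.inter_union_distrib_left]
    exact Finset.inter_eq_left.2 hS
  · intro p hp
    simp only [Finset.mem_product, Finset.mem_powerset] at hp
    have h1 : ((p.1 ∪ p.2) : Finset V) ∩ C = p.1 := by
      ext x
      simp only [Finset.mem_inter, Finset.mem_union]
      exact ⟨fun h => h.1.resolve_right fun h2 => (Finset.disjoint_right.1 hd (hp.2 h2)) h.2,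
        fun h => ⟨Or.inl h, hp.1 h⟩⟩
    have h2 : ((p.1 ∪ p.2) : Finset V) ∩ D = p.2 := by
      ext x
      simp only [Finset.mem_inter, Finset.mem_union]
      exact ⟨fun h => h.1.resolve_left fun h2 => (Finset.disjoint_left.1 hd (hp.1 h2)) h.2,
        fun h => ⟨Or.inr h, hp.2 h⟩⟩
    ext <;> simp [h1, h2]
  · intro S hS
    simp only [Finset.mem_powerset] at hS
    by_cases h1 : IsPMS G (S ∩ C) <;> by_cases h2 : IsPMS G (S ∩ D) <;>
      simp only [h1, h2, and_true, and_false, true_and, false_and, if_true, if_false,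
        mul_zero, zero_mul, if_neg, ite_mul, mul_ite]
    · have hdS : Disjoint (S ∩ C) (S ∩ D) :=
        Finset.disjoint_of_subset_left Finset.inter_subset_right
          (Finset.disjoint_of_subset_right Finset.inter_subset_right hd)
    -- need: S.card = (S∩C).card + (S∩D).card, and even split
      have hcard : S.card = (S ∩ C).card + (S ∩ D).card := by
        rw [← Finset.card_union_of_disjoint hdS, ← Finset.inter_union_distrib_left,
          Finset.inter_eq_left.2 hS]
      obtain ⟨a, ha⟩ := isPMS_even h1
      obtain ⟨b, hb⟩ := isPMS_even h2
      rw [hcard, ha, hb, ← pow_add]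
      congr 1
      omega

lemma pms_char [Fintype V] [DecidableEq V] {G' : SimpleGraph V} {A B : Finset V} {v : V}
    (hAB : A ∩ B = {v}) (hcover : A ∪ B = Finset.univ)
    (hedges : ∀ a b, G'.Adj a b → (a ∈ A ∧ b ∈ A) ∨ (a ∈ B ∧ b ∈ B)) (S : Finset V) :
    IsPMS G' S ↔
      (IsPMS G' (S ∩ A) ∧ IsPMS G' (S ∩ B.erase v)) ∨
        (IsPMS G' (S ∩ A.erase v) ∧ IsPMS G' (S ∩ B)) := by
  classical
  have hvA : v ∈ A := by
    have : v ∈ A ∩ B := by rw [hAB]; exact Finset.mem_singleton_self v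
    exact (Finset.mem_inter.1 this).1
  have hvB : v ∈ B := by
    have : v ∈ A ∩ B := by rw [hAB]; exact Finset.mem_singleton_self v
    exact (Finset.mem_inter.1 this).2
  have hABx : ∀ x, x ∈ A → x ∈ B → x = v := by
    intro x hxA hxB
    have : x ∈ A ∩ B := Finset.mem_inter.2 ⟨hxA, hxB⟩
    rw [hAB] at this
    exact Finset.mem_singleton.1 this
  have edge_side : ∀ e ∈ G'.edgeSet, (∀ x ∈ e, x ∈ A) ∨ (∀ x ∈ e, x ∈ B) := by
    intro e he
    induction e with
    | _ a b =>
      rw [SimpleGraph.mem_edgeSet] at he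
      rcases hedges a b he with ⟨ha, hb⟩ | ⟨ha, hb⟩
      · left; intro x hx; rcases Sym2.mem_iff.1 hx with rfl | rfl <;> assumption
      · right; intro x hx; rcases Sym2.mem_iff.1 hx with rfl | rfl <;> assumption
  constructor
  · rintro ⟨M, ⟨⟨hedge, hdisj⟩, hcov⟩⟩
    set MA := M.filter (fun e => ∀ x ∈ e, x ∈ A) with hMA
    set MB := M.filter (fun e => ¬ ∀ x ∈ e, x ∈ A) with hMB
    have hMAsub : MA ⊆ M := Finset.filter_subset _ _
    have hMBsub : MB ⊆ M := Finset.filter_subset _ _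
    have hAside : ∀ e ∈ MA, ∀ x ∈ e, x ∈ A := fun e he => (Finset.mem_filter.1 he).2
    have hBside : ∀ e ∈ MB, ∀ x ∈ e, x ∈ B := by
      intro e he
      rcases edge_side e (hedge (hMBsub he)) with h | h
      · exact absurd h (Finset.mem_filter.1 he).2
      · exact h
    have hmatchA : IsGraphMatching G' MA :=
      ⟨fun e he => hedge (hMAsub he),
        fun e he f hf => hdisj e (hMAsub he) f (hMAsub hf)⟩
    have hmatchB : IsGraphMatching G' MB :=
      ⟨fun e he => hedge (hMBsub he),
        fun e he f hf => hdisj e (hMBsub he) f (hMBsub hf)⟩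
    have hxS : ∀ e ∈ M, ∀ x ∈ e, x ∈ S := fun e he x hx => (hcov x).2 ⟨e, he, hx⟩
    by_cases hc : ∀ e ∈ MB, v ∉ e
    · left
      refine ⟨⟨MA, hmatchA, ?_⟩, ⟨MB, hmatchB, ?_⟩⟩
      · intro x
        simp only [Finset.mem_inter]
        constructor
        · rintro ⟨hxSm, hxA⟩
          obtain ⟨e, he, hxe⟩ := (hcov x).1 hxSm
          refine ⟨e, ?_, hxe⟩
          rw [hMA, Finset.mem_filter]
          refine ⟨he, ?_⟩
          by_contra hna
          have heB : e ∈ MB := Finset.mem_filter.2 ⟨he, hna⟩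
          have hxv : x = v := hABx x hxA (hBside e heB x hxe)
          subst hxv
          exact hc e heB hxe
        · rintro ⟨e, he, hxe⟩
          exact ⟨hxS e (hMAsub he) x hxe, hAside e he x hxe⟩
      · intro x
        simp only [Finset.mem_inter, Finset.mem_erase]
        constructor
        · rintro ⟨hxSm, hxv, hxB⟩
          obtain ⟨e, he, hxe⟩ := (hcov x).1 hxSm
          refine ⟨e, ?_, hxe⟩
          rw [hMB, Finset.mem_filter]
          exact ⟨he, fun hall => hxv (hABx x (hall x hxe) hxB)⟩
        · rintro ⟨e, he, hxe⟩
          refine ⟨hxS e (hMBsub he) x hxe, fun hxv => ?_, hBside e he x hxe⟩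
          subst hxv
          exact hc e he hxe
    · right
      push_neg at hc
      obtain ⟨e₀, he₀, hv₀⟩ := hc
      have he₀A : ¬ ∀ x ∈ e₀, x ∈ A := (Finset.mem_filter.1 he₀).2
      have hnoA : ∀ e ∈ MA, v ∉ e := by
        intro e he hv
        have hne : e ≠ e₀ := by
          rintro rfl
          exact he₀A (hAside e he)
        exact hdisj e (hMAsub he) e₀ (hMBsub he₀) hne v hv hv₀
      refine ⟨⟨MA, hmatchA, ?_⟩, ⟨MB, hmatchB, ?_⟩⟩
      · intro x
        simp only [Finset.mem_inter, Finset.mem_erase]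
        constructor
        · rintro ⟨hxSm, hxv, hxA⟩
          obtain ⟨e, he, hxe⟩ := (hcov x).1 hxSm
          refine ⟨e, ?_, hxe⟩
          rw [hMA, Finset.mem_filter]
          refine ⟨he, ?_⟩
          by_contra hna
          have heB : e ∈ MB := Finset.mem_filter.2 ⟨he, hna⟩
          exact hxv (hABx x hxA (hBside e heB x hxe))
        · rintro ⟨e, he, hxe⟩
          refine ⟨hxS e (hMAsub he) x hxe, fun hxv => ?_, hAside e he x hxe⟩
          subst hxv
          exact hnoA e he hxe
      · intro x
        simp only [Finset.mem_inter]
        constructor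
        · rintro ⟨hxSm, hxB⟩
          obtain ⟨e, he, hxe⟩ := (hcov x).1 hxSm
          refine ⟨e, ?_, hxe⟩
          rw [hMB, Finset.mem_filter]
          refine ⟨he, fun hall => ?_⟩
          have hxv : x = v := hABx x (hall x hxe) hxB
          subst hxv
          exact hnoA e (Finset.mem_filter.2 ⟨he, hall⟩) hxe
        · rintro ⟨e, he, hxe⟩
          exact ⟨hxS e (hMBsub he) x hxe, hBside e he x hxe⟩
  · rintro (⟨h1, h2⟩ | ⟨h1, h2⟩)
    · have hd : Disjoint (S ∩ A) (S ∩ B.erase v) := by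
        rw [Finset.disjoint_left]
        intro x hx hx'
        simp only [Finset.mem_inter, Finset.mem_erase] at hx hx'
        exact hx'.2.1 (hABx x hx.2 hx'.2.2)
      have hu : (S ∩ A) ∪ (S ∩ B.erase v) = S := by
        ext x
        simp only [Finset.mem_union, Finset.mem_inter, Finset.mem_erase]
        constructor
        · rintro (⟨h, _⟩ | ⟨h, _⟩) <;> exact h
        · intro hx
          by_cases hxA : x ∈ A
          · exact Or.inl ⟨hx, hxA⟩
          · have hxB : x ∈ B := by
              have : x ∈ A ∪ B := by rw [hcover]; exact Finset.mem_univ x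
              exact (Finset.mem_union.1 this).resolve_left hxA
            exact Or.inr ⟨hx, fun h => hxA (h ▸ hvA), hxB⟩
      have := isPMS_union h1 h2 hd
      rwa [hu] at this
    · have hd : Disjoint (S ∩ A.erase v) (S ∩ B) := by
        rw [Finset.disjoint_left]
        intro x hx hx'
        simp only [Finset.mem_inter, Finset.mem_erase] at hx hx'
        exact hx.2.1 (hABx x hx.2.2 hx'.2)
      have hu : (S ∩ A.erase v) ∪ (S ∩ B) = S := by
        ext x
        simp only [Finset.mem_union, Finset.mem_inter, Finset.mem_erase]
        constructor
        · rintro (⟨h, _⟩ | ⟨h, _⟩) <;> exact h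
        · intro hx
          by_cases hxB : x ∈ B
          · exact Or.inr ⟨hx, hxB⟩
          · have hxA : x ∈ A := by
              have : x ∈ A ∪ B := by rw [hcover]; exact Finset.mem_univ x
              exact (Finset.mem_union.1 this).resolve_right hxB
            exact Or.inl ⟨hx, fun h => hxB (h ▸ hvB), hxA⟩
      have := isPMS_union h1 h2 hd
      rwa [hu] at this

lemma pms_both [DecidableEq V] {G' : SimpleGraph V} {A B : Finset V} {v : V}
    (hvA : v ∈ A) (hvB : v ∈ B) (S : Finset V) :
    ((IsPMS G' (S ∩ A) ∧ IsPMS G' (S ∩ B.erase v)) ∧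
        (IsPMS G' (S ∩ A.erase v) ∧ IsPMS G' (S ∩ B))) ↔
      (v ∉ S ∧ IsPMS G' (S ∩ A.erase v) ∧ IsPMS G' (S ∩ B.erase v)) := by
  have hkey : ∀ T : Finset V, v ∉ S → S ∩ T.erase v = S ∩ T := by
    intro T hv
    ext x
    simp only [Finset.mem_inter, Finset.mem_erase]
    constructor
    · rintro ⟨h1, _, h2⟩; exact ⟨h1, h2⟩
    · rintro ⟨h1, h2⟩; exact ⟨h1, fun h => hv (h ▸ h1), h2⟩
  constructor
  · rintro ⟨⟨h1, h2⟩, h3, h4⟩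
    have hvS : v ∉ S := by
      intro hvS
      have hvSA : v ∈ S ∩ A := Finset.mem_inter.2 ⟨hvS, hvA⟩
      have hErase : S ∩ A.erase v = (S ∩ A).erase v := by
        ext x
        simp only [Finset.mem_inter, Finset.mem_erase]
        tauto
      have e1 := isPMS_even h1
      have e3 := isPMS_even h3
      rw [hErase, Finset.card_erase_of_mem hvSA] at e3
      have hpos : 0 < (S ∩ A).card := Finset.card_pos.2 ⟨v, hvSA⟩
      rcases e1 with ⟨a, ha⟩
      rcases e3 with ⟨b, hb⟩
      omega
    exact ⟨hvS, h3, h2⟩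
  · rintro ⟨hvS, h1, h2⟩
    rw [hkey A hvS] at h1
    rw [hkey B hvS] at h2
    constructor
    · exact ⟨h1, by rwa [hkey B hvS]⟩
    · exact ⟨by rwa [hkey A hvS], h2⟩

/-- if `G'` is obtained by gluing the graph induced on `A` and the graph
induced on `B` at the single shared vertex `v` (so `G = G'[A]`, `H = G'[B]`), then
`p(G'; z) = p(G; z)·p(H; z) − p_v(G; z)·p_v(H; z)`. -/
theorem stmt7 [Fintype V] [DecidableEq V] (G' : SimpleGraph V) (A B : Finset V) (v : V)
    (hAB : A ∩ B = {v}) (hcover : A ∪ B = Finset.univ)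
    (hedges : ∀ a b, G'.Adj a b → (a ∈ A ∧ b ∈ A) ∨ (a ∈ B ∧ b ∈ B)) :
    pmPoly G' Finset.univ =
      pmPoly G' A * pmPoly G' B -
        (pmPoly G' A - pmPoly G' (A.erase v)) * (pmPoly G' B - pmPoly G' (B.erase v)) := by
  classical
  have hvA : v ∈ A := by
    have : v ∈ A ∩ B := by rw [hAB]; exact Finset.mem_singleton_self v
    exact (Finset.mem_inter.1 this).1
  have hvB : v ∈ B := by
    have : v ∈ A ∩ B := by rw [hAB]; exact Finset.mem_singleton_self v
    exact (Finset.mem_inter.1 this).2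
  have hABx : ∀ x, x ∈ A → x ∈ B → x = v := by
    intro x hxA hxB
    have : x ∈ A ∩ B := Finset.mem_inter.2 ⟨hxA, hxB⟩
    rw [hAB] at this
    exact Finset.mem_singleton.1 this
  have hmemAB : ∀ x : V, x ∈ A ∨ x ∈ B := by
    intro x
    have : x ∈ A ∪ B := by rw [hcover]; exact Finset.mem_univ x
    exact Finset.mem_union.1 this
  have hdAB' : Disjoint A (B.erase v) := by
    rw [Finset.disjoint_left]
    intro x hx hx'
    rw [Finset.mem_erase] at hx'
    exact hx'.1 (hABx x hx hx'.2)
  have hdA'B : Disjoint (A.erase v) B := by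
    rw [Finset.disjoint_left]
    intro x hx hx'
    rw [Finset.mem_erase] at hx
    exact hx.1 (hABx x hx.2 hx')
  have hdA'B' : Disjoint (A.erase v) (B.erase v) :=
    Finset.disjoint_of_subset_left (Finset.erase_subset _ _) hdAB'
  have huAB' : A ∪ B.erase v = Finset.univ := by
    ext x
    simp only [Finset.mem_union, Finset.mem_erase, Finset.mem_univ, iff_true]
    rcases hmemAB x with h | h
    · exact Or.inl h
    · by_cases hx : x = v
      · exact Or.inl (hx ▸ hvA)
      · exact Or.inr ⟨hx, h⟩
  have huA'B : A.erase v ∪ B = Finset.univ := by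
    ext x
    simp only [Finset.mem_union, Finset.mem_erase, Finset.mem_univ, iff_true]
    rcases hmemAB x with h | h
    · by_cases hx : x = v
      · exact Or.inr (hx ▸ hvB)
      · exact Or.inl ⟨hx, h⟩
    · exact Or.inr h
  have huA'B' : A.erase v ∪ B.erase v = Finset.univ.erase v := by
    ext x
    simp only [Finset.mem_union, Finset.mem_erase, Finset.mem_univ, and_true]
    constructor
    · rintro (⟨h, _⟩ | ⟨h, _⟩) <;> exact h
    · intro h
      rcases hmemAB x with h' | h'
      · exact Or.inl ⟨h, h'⟩
      · exact Or.inr ⟨h, h'⟩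
  have step1 : pmPoly G' Finset.univ
      = (∑ S ∈ (Finset.univ : Finset V).powerset,
          if IsPMS G' (S ∩ A) ∧ IsPMS G' (S ∩ B.erase v) then (X : Polynomial ℤ) ^ (S.card / 2) else 0)
      + (∑ S ∈ (Finset.univ : Finset V).powerset,
          if IsPMS G' (S ∩ A.erase v) ∧ IsPMS G' (S ∩ B) then (X : Polynomial ℤ) ^ (S.card / 2) else 0)
      - (∑ S ∈ (Finset.univ : Finset V).powerset,
          if (IsPMS G' (S ∩ A) ∧ IsPMS G' (S ∩ B.erase v)) ∧
              (IsPMS G' (S ∩ A.erase v) ∧ IsPMS G' (S ∩ B)) then (X : Polynomial ℤ) ^ (S.card / 2) else 0) := by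
    rw [pmPoly, ← Finset.sum_add_distrib, ← Finset.sum_sub_distrib]
    apply Finset.sum_congr rfl
    intro S _
    rw [pms_char hAB hcover hedges S]
    by_cases h1 : IsPMS G' (S ∩ A) ∧ IsPMS G' (S ∩ B.erase v) <;>
      by_cases h2 : IsPMS G' (S ∩ A.erase v) ∧ IsPMS G' (S ∩ B) <;>
      simp [h1, h2]
  have S1 : (∑ S ∈ (Finset.univ : Finset V).powerset,
        if IsPMS G' (S ∩ A) ∧ IsPMS G' (S ∩ B.erase v) then (X : Polynomial ℤ) ^ (S.card / 2) else 0)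
      = pmPoly G' A * pmPoly G' (B.erase v) := by
    rw [← huAB']
    exact pm_prod G' A (B.erase v) hdAB'
  have S2 : (∑ S ∈ (Finset.univ : Finset V).powerset,
        if IsPMS G' (S ∩ A.erase v) ∧ IsPMS G' (S ∩ B) then (X : Polynomial ℤ) ^ (S.card / 2) else 0)
      = pmPoly G' (A.erase v) * pmPoly G' B := by
    rw [← huA'B]
    exact pm_prod G' (A.erase v) B hdA'B
  have S3 : (∑ S ∈ (Finset.univ : Finset V).powerset,
        if (IsPMS G' (S ∩ A) ∧ IsPMS G' (S ∩ B.erase v)) ∧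
            (IsPMS G' (S ∩ A.erase v) ∧ IsPMS G' (S ∩ B)) then (X : Polynomial ℤ) ^ (S.card / 2) else 0)
      = pmPoly G' (A.erase v) * pmPoly G' (B.erase v) := by
    have e1 : (∑ S ∈ (Finset.univ : Finset V).powerset,
          if (IsPMS G' (S ∩ A) ∧ IsPMS G' (S ∩ B.erase v)) ∧
              (IsPMS G' (S ∩ A.erase v) ∧ IsPMS G' (S ∩ B)) then (X : Polynomial ℤ) ^ (S.card / 2) else 0)
        = ∑ S ∈ ((Finset.univ : Finset V).erase v).powerset,
            if IsPMS G' (S ∩ A.erase v) ∧ IsPMS G' (S ∩ B.erase v) then (X : Polynomial ℤ) ^ (S.card / 2) else 0 := by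
      rw [← Finset.sum_subset (Finset.powerset_mono.2 (Finset.erase_subset _ _))]
      · apply Finset.sum_congr rfl
        intro S hS
        rw [Finset.mem_powerset] at hS
        have hvS : v ∉ S := fun h => (Finset.mem_erase.1 (hS h)).1 rfl
        simp only [pms_both hvA hvB S]
        simp [hvS]
      · intro S _ hS
        rw [Finset.mem_powerset] at hS
        simp only [pms_both hvA hvB S]
        rw [if_neg]
        rintro ⟨hvS, -⟩
        apply hS
        intro x hx
        exact Finset.mem_erase.2 ⟨fun h => hvS (h ▸ hx), Finset.mem_univ x⟩
    rw [e1, ← huA'B']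
    exact pm_prod G' (A.erase v) (B.erase v) hdA'B'
  rw [step1, S1, S2, S3]
  ring
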